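/- Let M be a d×d real matrix and let w = u + i v ∈ ℂ^d (u, v ∈ ℝ^d, |u|² + |v|² = 1) be a unit eigenvector of M with eigenvalue z = a + i b (a, b ∈ ℝ). Then ⟨(M^a M^s − M^s M^a) u, u⟩ + ⟨(M^a M^s − M^s M^a) v, v⟩ ≥ 0. -/
import Mathlib

open Matrix

theorem stmt3 (d : ℕ) (hd : 1 ≤ d)
    (M Ms Ma : Matrix (Fin d) (Fin d) ℝ)
    (hMs : Ms = (1 / 2 : ℝ) • (M + Mᵀ))
    (hMa : Ma = (1 / 2 : ℝ) • (M - Mᵀ))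
    (a b : ℝ) (u v : Fin d → ℝ)
    (hunit : (∑ i, u i ^ 2) + (∑ i, v i ^ 2) = 1)
    (w : Fin d → ℂ) (hw : w = fun i => (u i : ℂ) + (v i : ℂ) * Complex.I)
    (heig : (M.map Complex.ofReal).mulVec w = ((a : ℂ) + (b : ℂ) * Complex.I) • w) :
    0 ≤ (Ma * Ms - Ms * Ma).mulVec u ⬝ᵥ u + (Ma * Ms - Ms * Ma).mulVec v ⬝ᵥ v := by
  -- eigenvector equations in real form
  have hMuv : M.mulVec u = a • u - b • v ∧ M.mulVec v = b • u + a • v := by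
    constructor <;> funext i <;>
    · have h := congrFun heig i
      simp only [hw, Matrix.mulVec, dotProduct, Matrix.map_apply, Pi.smul_apply,
        smul_eq_mul, Complex.ext_iff, Complex.re_sum, Complex.im_sum, Complex.mul_re,
        Complex.mul_im, Complex.add_re, Complex.add_im, Complex.ofReal_re, Complex.ofReal_im,
        Complex.I_re, Complex.I_im, mul_zero, zero_mul, mul_one, sub_zero, add_zero, zero_add,
        zero_sub, neg_zero, neg_neg] at h
      obtain ⟨h1, h2⟩ := h
      simp only [Matrix.mulVec, dotProduct, Pi.sub_apply, Pi.add_apply, Pi.smul_apply,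
        smul_eq_mul]
      linarith [h1, h2]
  obtain ⟨hMu, hMv⟩ := hMuv
  have key : ∀ (A : Matrix (Fin d) (Fin d) ℝ) (x y : Fin d → ℝ),
      (A.mulVec x) ⬝ᵥ y = x ⬝ᵥ (Aᵀ.mulVec y) := by
    intro A x y
    rw [Matrix.dotProduct_mulVec, Matrix.vecMul_transpose]
  have hMsT : Msᵀ = Ms := by
    rw [hMs, Matrix.transpose_smul, Matrix.transpose_add, Matrix.transpose_transpose, add_comm]
  have hMaT : Maᵀ = -Ma := by
    rw [hMa, Matrix.transpose_smul, Matrix.transpose_sub, Matrix.transpose_transpose,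
      ← smul_neg, neg_sub]
  -- the quadratic form reduces to a difference of norms
  have hterm : ∀ x : Fin d → ℝ, (Ma * Ms - Ms * Ma).mulVec x ⬝ᵥ x
      = (1/2) * ((Mᵀ.mulVec x) ⬝ᵥ (Mᵀ.mulVec x) - (M.mulVec x) ⬝ᵥ (M.mulVec x)) := by
    intro x
    have e1 : (Ma.mulVec (Ms.mulVec x)) ⬝ᵥ x = -((Ms.mulVec x) ⬝ᵥ (Ma.mulVec x)) := by
      rw [key Ma (Ms.mulVec x) x, hMaT, Matrix.neg_mulVec, dotProduct_neg]
    have e2 : (Ms.mulVec (Ma.mulVec x)) ⬝ᵥ x = (Ma.mulVec x) ⬝ᵥ (Ms.mulVec x) := by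
      rw [key Ms (Ma.mulVec x) x, hMsT]
    rw [Matrix.sub_mulVec, sub_dotProduct, ← Matrix.mulVec_mulVec,
      ← Matrix.mulVec_mulVec, e1, e2]
    have hadd : Ms.mulVec x = (1/2 : ℝ) • (M.mulVec x + Mᵀ.mulVec x) := by
      rw [hMs, Matrix.smul_mulVec, Matrix.add_mulVec]
    have hsub : Ma.mulVec x = (1/2 : ℝ) • (M.mulVec x - Mᵀ.mulVec x) := by
      rw [hMa, Matrix.smul_mulVec, Matrix.sub_mulVec]
    rw [hadd, hsub]
    set p := M.mulVec x
    set q := Mᵀ.mulVec x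
    simp only [smul_dotProduct, dotProduct_smul, add_dotProduct,
      dotProduct_add, sub_dotProduct, dotProduct_sub, smul_eq_mul]
    have := dotProduct_comm p q
    linarith
  rw [hterm u, hterm v]
  set P := Mᵀ.mulVec u with hP
  set Q := Mᵀ.mulVec v with hQ
  have hself : ∀ x : Fin d → ℝ, 0 ≤ x ⬝ᵥ x := fun x =>
    Finset.sum_nonneg fun i _ => mul_self_nonneg _
  have h1 := hself (P - a • u - b • v)
  have h2 := hself (Q + b • u - a • v)
  have hPu : P ⬝ᵥ u = a * (u ⬝ᵥ u) - b * (u ⬝ᵥ v) := by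
    rw [dotProduct_comm, hP, ← key, hMu]
    simp only [sub_dotProduct, smul_dotProduct, smul_eq_mul]
    rw [dotProduct_comm v u]
  have hPv : P ⬝ᵥ v = b * (u ⬝ᵥ u) + a * (u ⬝ᵥ v) := by
    rw [dotProduct_comm, hP, ← key, hMv]
    simp only [add_dotProduct, smul_dotProduct, smul_eq_mul]
    rw [dotProduct_comm v u]
  have hQu : Q ⬝ᵥ u = a * (u ⬝ᵥ v) - b * (v ⬝ᵥ v) := by
    rw [dotProduct_comm, hQ, ← key, hMu]
    simp only [sub_dotProduct, smul_dotProduct, smul_eq_mul]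
  have hQv : Q ⬝ᵥ v = b * (u ⬝ᵥ v) + a * (v ⬝ᵥ v) := by
    rw [dotProduct_comm, hQ, ← key, hMv]
    simp only [add_dotProduct, smul_dotProduct, smul_eq_mul]
  have hMuMu : (M.mulVec u) ⬝ᵥ (M.mulVec u)
      = a^2 * (u ⬝ᵥ u) - 2*a*b*(u ⬝ᵥ v) + b^2 * (v ⬝ᵥ v) := by
    rw [hMu]
    simp only [sub_dotProduct, dotProduct_sub, smul_dotProduct,
      dotProduct_smul, smul_eq_mul]
    rw [dotProduct_comm v u]
    ring
  have hMvMv : (M.mulVec v) ⬝ᵥ (M.mulVec v)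
      = b^2 * (u ⬝ᵥ u) + 2*a*b*(u ⬝ᵥ v) + a^2 * (v ⬝ᵥ v) := by
    rw [hMv]
    simp only [add_dotProduct, dotProduct_add, smul_dotProduct,
      dotProduct_smul, smul_eq_mul]
    rw [dotProduct_comm v u]
    ring
  -- expand h1 h2
  simp only [sub_dotProduct, dotProduct_sub, add_dotProduct,
    dotProduct_add, smul_dotProduct, dotProduct_smul, smul_eq_mul] at h1 h2
  rw [dotProduct_comm u P, dotProduct_comm v P, dotProduct_comm v u,
    hPu, hPv] at h1
  rw [dotProduct_comm u Q, dotProduct_comm v Q, dotProduct_comm v u,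
    hQu, hQv] at h2
  have huv1 : (u ⬝ᵥ u) + (v ⬝ᵥ v) = 1 := by
    have hU : u ⬝ᵥ u = ∑ i, u i ^ 2 := by simp [dotProduct, sq]
    have hV : v ⬝ᵥ v = ∑ i, v i ^ 2 := by simp [dotProduct, sq]
    rw [hU, hV]; exact hunit
  have hcomb : (a^2 + b^2) * ((u ⬝ᵥ u) + (v ⬝ᵥ v) - 1) = 0 := by rw [huv1]; ring
  rw [hMuMu, hMvMv]
  nlinarith [h1, h2, hcomb]
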